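/- Let Γ be a finite acyclic digraph on vertex set {1,…,n} with edge set E, let K be the fraction field of the polynomial ring over ℚ in independent variables x_e indexed by the edges e ∈ E, and let M_Γ be the n×n matrix over K whose (i,j) entry is x_{(i,j)} if (i,j) ∈ E and 0 otherwise. Then M_Γ is nilpotent and its index of nilpotency equals the maximum number of vertices on a directed path in Γ. -/

import Mathlib

/-- A directed path in the digraph on `Fin n` with edge set `E`: a nonempty list of distinct
vertices in which consecutive vertices are joined by directed edges. -/
def IsPath {n : ℕ} (E : Finset (Fin n × Fin n)) (p : List (Fin n)) : Prop :=
  p ≠ [] ∧ p.Nodup ∧ p.Chain' (fun a b => (a, b) ∈ E)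

/-- The digraph on `Fin n` with edge set `E` is acyclic: no vertex reaches itself through a
nonempty sequence of directed edges. -/
def IsAcyclicDigraph {n : ℕ} (E : Finset (Fin n × Fin n)) : Prop :=
  ∀ v : Fin n, ¬ Relation.TransGen (fun a b => (a, b) ∈ E) v v

/-- The maximum number of vertices on a directed path in the digraph `(Fin n, E)`. -/
noncomputable def longestPath {n : ℕ} (E : Finset (Fin n × Fin n)) : ℕ :=
  sSup {m | ∃ p : List (Fin n), IsPath E p ∧ m = p.length}

/-- The generic matrix of the digraph `(Fin n, E)`: the `(i,j)` entry is the transcendental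
`x_{(i,j)}` if `(i,j) ∈ E`, and `0` otherwise, over the fraction field of the polynomial ring
over `ℚ` in independent variables indexed by the edges. -/
noncomputable def genericMatrix (n : ℕ) (E : Finset (Fin n × Fin n)) :
    Matrix (Fin n) (Fin n) (FractionRing (MvPolynomial {e : Fin n × Fin n // e ∈ E} ℚ)) :=
  Matrix.of fun i j =>
    if h : (i, j) ∈ E then
      algebraMap (MvPolynomial {e : Fin n × Fin n // e ∈ E} ℚ) _ (MvPolynomial.X ⟨(i, j), h⟩)
    else 0

/-- From a chain, transitive steps between earlier and later entries. -/
lemma chain'_transGen {α : Type*} {r : α → α → Prop} {p : List α} (h : List.Chain' r p) :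
    ∀ j (hj : j < p.length) i (hij : i < j),
      Relation.TransGen r (p.get ⟨i, hij.trans hj⟩) (p.get ⟨j, hj⟩) := by
  intro j
  induction j with
  | zero => intro _ i hij; omega
  | succ j ih =>
    intro hj i hij
    have hstep : r (p.get ⟨j, by omega⟩) (p.get ⟨j + 1, hj⟩) :=
      List.isChain_iff_getElem.mp h j (by omega)
    rcases Nat.lt_or_ge i j with hlt | hge
    · exact (ih (by omega) i hlt).tail hstep
    · have : i = j := by omega
      subst this
      exact Relation.TransGen.single hstep

noncomputable def polyMatrix (n : ℕ) (E : Finset (Fin n × Fin n)) :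
    Matrix (Fin n) (Fin n) (MvPolynomial {e : Fin n × Fin n // e ∈ E} ℚ) :=
  Matrix.of fun i j =>
    if h : (i, j) ∈ E then MvPolynomial.X ⟨(i, j), h⟩ else 0

lemma genericMatrix_eq (n : ℕ) (E : Finset (Fin n × Fin n)) :
    genericMatrix n E =
      ((algebraMap (MvPolynomial {e : Fin n × Fin n // e ∈ E} ℚ)
        (FractionRing (MvPolynomial {e : Fin n × Fin n // e ∈ E} ℚ))).mapMatrix)
        (polyMatrix n E) := by
  ext i j
  simp only [genericMatrix, polyMatrix, RingHom.mapMatrix_apply, Matrix.map_apply,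
    Matrix.of_apply]
  split <;> simp

/-- Nonzero entries of powers of the polynomial matrix give walks. -/
lemma walk_of_pow_ne_zero {n : ℕ} (E : Finset (Fin n × Fin n)) :
    ∀ (k : ℕ) (i j : Fin n), ((polyMatrix n E) ^ k) i j ≠ 0 →
      ∃ p : List (Fin n), p.Chain' (fun a b => (a, b) ∈ E) ∧
        p.head? = some i ∧ p.getLast? = some j ∧ p.length = k + 1 := by
  intro k
  induction k with
  | zero =>
    intro i j h
    rw [pow_zero] at h
    have hij : i = j := by
      by_contra hne
      exact h (Matrix.one_apply_ne hne)
    exact ⟨[i], List.isChain_singleton i, by simp, by simp [hij], rfl⟩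
  | succ k ih =>
    intro i j h
    rw [pow_succ, Matrix.mul_apply] at h
    obtain ⟨l, -, hl⟩ := Finset.exists_ne_zero_of_sum_ne_zero h
    have h1 : ((polyMatrix n E) ^ k) i l ≠ 0 := fun h0 => hl (by rw [h0, zero_mul])
    have h2 : (polyMatrix n E) l j ≠ 0 := fun h0 => hl (by rw [h0, mul_zero])
    have hlj : (l, j) ∈ E := by
      by_contra hne
      exact h2 (by simp [polyMatrix, hne])
    obtain ⟨p, hc, hh, hlast, hlen⟩ := ih i l h1
    have hpne : p ≠ [] := by
      intro h0; rw [h0] at hlen; simp at hlen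
    refine ⟨p ++ [j], ?_, ?_, ?_, ?_⟩
    · rw [show List.Chain' (fun a b => (a, b) ∈ E) (p ++ [j]) = List.IsChain _ _ from rfl, List.isChain_append]
      refine ⟨hc, List.isChain_singleton j, ?_⟩
      intro x hx y hy
      simp only [List.head?_cons, Option.mem_def, Option.some.injEq] at hy
      rw [hlast] at hx
      simp only [Option.mem_def, Option.some.injEq] at hx
      subst hx; subst hy; exact hlj
    · rw [List.head?_append_of_ne_nil _ hpne, hh]
    · exact List.getLast?_concat (l := p)
    · simp [hlen]

/-- In an acyclic digraph, chains are nodup. -/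
lemma chain'_nodup {n : ℕ} {E : Finset (Fin n × Fin n)} (hE : IsAcyclicDigraph E)
    {p : List (Fin n)} (hc : p.Chain' (fun a b => (a, b) ∈ E)) : p.Nodup := by
  rw [List.nodup_iff_injective_get]
  intro a b hab
  by_contra hne
  rcases Fin.lt_or_lt_of_ne hne with hlt | hlt
  · have := chain'_transGen hc b b.isLt a hlt
    rw [hab] at this
    exact hE _ (by convert this)
  · have := chain'_transGen hc a a.isLt b hlt
    rw [hab] at this
    exact hE _ (by convert this)

lemma bddAbove_pathLengths {n : ℕ} (E : Finset (Fin n × Fin n)) :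
    n ∈ upperBounds {m | ∃ p : List (Fin n), IsPath E p ∧ m = p.length} := by
  rintro k ⟨p, ⟨-, hnd, -⟩, rfl⟩
  simpa using hnd.length_le_card

/-- For an acyclic digraph `Γ = (Fin n, E)`, the generic matrix `M_Γ` is nilpotent and its
index of nilpotency equals the maximum number of vertices on a directed path in `Γ`. -/
theorem stmt_6 {n : ℕ} (E : Finset (Fin n × Fin n)) (hE : IsAcyclicDigraph E) :
    (genericMatrix n E) ^ (longestPath E) = 0 ∧
      ∀ m : ℕ, (genericMatrix n E) ^ m = 0 → longestPath E ≤ m := by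
  classical
  set R := MvPolynomial {e : Fin n × Fin n // e ∈ E} ℚ with hR
  set K := FractionRing R with hK
  set N := polyMatrix n E with hN
  have hmap : ∀ k : ℕ, (genericMatrix n E) ^ k = ((algebraMap R K).mapMatrix) (N ^ k) := by
    intro k
    rw [genericMatrix_eq, ← map_pow]
  constructor
  · -- vanishing at the longest path length
    have hNzero : N ^ (longestPath E) = 0 := by
      rw [← Matrix.ext_iff]
      intro i j
      by_contra h
      simp only [Matrix.zero_apply] at h
      obtain ⟨p, hc, hh, hlast, hlen⟩ := walk_of_pow_ne_zero E (longestPath E) i j h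
      have hnd := chain'_nodup hE hc
      have hne : p ≠ [] := by intro h0; rw [h0] at hlen; simp at hlen
      have hmem : longestPath E + 1 ∈
          {m | ∃ p : List (Fin n), IsPath E p ∧ m = p.length} :=
        ⟨p, ⟨hne, hnd, hc⟩, hlen.symm⟩
      have h3 : longestPath E + 1 ≤ longestPath E :=
        le_csSup ⟨n, bddAbove_pathLengths E⟩ hmem
      omega
    rw [hmap, hNzero, map_zero]
  · -- minimality
    intro m hm
    have hNzero : N ^ m = 0 := by
      have h1 : ((N ^ m).map (algebraMap R K)) = 0 := by
        rw [← RingHom.mapMatrix_apply, ← hmap, hm]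
      rw [← Matrix.ext_iff]
      intro i j
      simp only [Matrix.zero_apply]
      have h2 : (algebraMap R K) ((N ^ m) i j) = 0 := by
        have := congrFun (congrFun h1 i) j
        simpa [Matrix.map_apply] using this
      simpa using IsFractionRing.injective R K (by simpa using h2)
    apply csSup_le'
    rintro k ⟨p, ⟨hne, hnd, hc⟩, rfl⟩
    by_contra hgt
    push_neg at hgt
    -- take the first m+1 vertices of p
    set q := p.take (m + 1) with hq
    have hqlen : q.length = m + 1 := by simp [hq]; omega
    have hqnd : q.Nodup := hnd.sublist (List.take_sublist _ _)
    have hqc : q.Chain' (fun a b => (a, b) ∈ E) := hc.take _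
    have hqne : q ≠ [] := by intro h0; rw [h0] at hqlen; simp at hqlen
    set v : ℕ → Fin n := fun t => q.getD t (q.head hqne) with hv
    have hvget : ∀ t (ht : t ≤ m), v t = q.get ⟨t, by omega⟩ := by
      intro t ht
      simp only [hv]
      rw [List.getD_eq_getElem q _ (by omega : t < q.length)]
      simp [List.get_eq_getElem]
    have hvinj : ∀ s t, s ≤ m → t ≤ m → v s = v t → s = t := by
      intro s t hs ht hst
      rw [hvget s hs, hvget t ht] at hst
      have := List.nodup_iff_injective_get.mp hqnd hst
      exact Fin.mk.inj_iff.mp this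
    have hedge : ∀ t, t < m → (v t, v (t + 1)) ∈ E := by
      intro t ht
      rw [hvget t (by omega), hvget (t + 1) (by omega)]
      exact List.isChain_iff_getElem.mp hqc t (by omega)
    -- evaluation sending path-edge variables to 1, others to 0
    set π : {e : Fin n × Fin n // e ∈ E} → ℚ :=
      fun e => if ∃ t, t < m ∧ (e : Fin n × Fin n) = (v t, v (t + 1)) then 1 else 0 with hπ
    set A : Matrix (Fin n) (Fin n) ℚ := ((MvPolynomial.eval π).mapMatrix) N with hA
    have hAentry : ∀ i j : Fin n,
        A i j = if ∃ t, t < m ∧ (i, j) = (v t, v (t + 1)) then 1 else 0 := by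
      intro i j
      simp only [hA, RingHom.mapMatrix_apply, Matrix.map_apply, hN, polyMatrix,
        Matrix.of_apply]
      split
      · next h => simp [hπ]
      · next h =>
        rw [map_zero]
        rw [eq_comm, if_neg]
        rintro ⟨t, ht, heq⟩
        rw [Prod.mk.injEq] at heq
        exact h (heq.1 ▸ heq.2 ▸ hedge t ht)
    have hclaim : ∀ k, k ≤ m → (A ^ k) (v 0) (v k) = 1 := by
      intro k
      induction k with
      | zero => intro _; exact Matrix.one_apply_eq _
      | succ k ih =>
        intro hk
        rw [pow_succ, Matrix.mul_apply]
        rw [Finset.sum_eq_single (v k)]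
        · rw [ih (by omega), hAentry, if_pos ⟨k, by omega, rfl⟩, one_mul]
        · intro l _ hlne
          rw [hAentry, if_neg, mul_zero]
          rintro ⟨t, ht, heq⟩
          rw [Prod.mk.injEq] at heq
          have : t + 1 = k + 1 := hvinj (t + 1) (k + 1) (by omega) (by omega) heq.2.symm
          exact hlne (by rw [heq.1, (by omega : t = k)])
        · intro h; exact absurd (Finset.mem_univ _) h
    have hAm : A ^ m = 0 := by
      rw [hA, ← map_pow, hNzero, map_zero]
    have := hclaim m le_rfl
    rw [hAm] at this
    simp at this
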